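/- An increasing homeomorphism of a compact interval with an even number of transverse fixed points is topologically conjugate to its inverse. -/

import Mathlib

open Set

/-- A fixed point which is attracting (for iterations of `f`). -/
def AttractingFix (f : ℝ → ℝ) (p : ℝ) : Prop :=
  f p = p ∧ ∃ η > 0, ∀ x ∈ Set.Ioo (p - η) (p + η),
    Filter.Tendsto (fun n => f^[n] x) Filter.atTop (nhds p)

/-- A fixed point which is repelling: nearby points eventually leave a
neighborhood of `p`. -/
def RepellingFix (f : ℝ → ℝ) (p : ℝ) : Prop :=
  f p = p ∧ ∃ η > 0, ∀ x ∈ Set.Ioo (p - η) (p + η), x ≠ p →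
    ∃ n, f^[n] x ∉ Set.Ioo (p - η) (p + η)

/-- A transverse fixed point: attracting or repelling. -/
def TransverseFix (f : ℝ → ℝ) (p : ℝ) : Prop :=
  AttractingFix f p ∨ RepellingFix f p

namespace Stmt10Aux

/-- ℤ-indexed iterates of a bijection `G` with inverse `G'`. -/
noncomputable def T (G G' : ℝ → ℝ) (n : ℤ) (x : ℝ) : ℝ :=
  G^[n.toNat] (G'^[(-n).toNat] x)

variable {G G' : ℝ → ℝ}

lemma T_zero (x : ℝ) : T G G' 0 x = x := by simp [T]

lemma T_of_nonneg {n : ℤ} (hn : 0 ≤ n) (x : ℝ) : T G G' n x = G^[n.toNat] x := by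
  simp [T, Int.toNat_of_nonpos (by omega : -n ≤ 0)]

lemma T_of_nonpos {n : ℤ} (hn : n ≤ 0) (x : ℝ) : T G G' n x = G'^[(-n).toNat] x := by
  simp [T, Int.toNat_of_nonpos hn]

lemma T_succ (hGG' : ∀ x, G (G' x) = x) (n : ℤ) (x : ℝ) :
    T G G' (n + 1) x = G (T G G' n x) := by
  rcases le_or_gt 0 n with hn | hn
  · rw [T_of_nonneg hn, T_of_nonneg (by omega)]
    have : (n + 1).toNat = n.toNat + 1 := by omega
    rw [this, Function.iterate_succ_apply']
  · rw [T_of_nonpos (by omega), T_of_nonpos (by omega)]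
    have : (-n).toNat = (-(n + 1)).toNat + 1 := by omega
    rw [this, Function.iterate_succ_apply', hGG']

lemma T_pred (hG'G : ∀ x, G' (G x) = x) (n : ℤ) (x : ℝ) :
    T G G' (n - 1) x = G' (T G G' n x) := by
  rcases le_or_gt n 0 with hn | hn
  · rw [T_of_nonpos (by omega), T_of_nonpos hn]
    have : (-(n - 1)).toNat = (-n).toNat + 1 := by omega
    rw [this, Function.iterate_succ_apply']
  · rw [T_of_nonneg (by omega), T_of_nonneg (by omega)]
    have : n.toNat = (n - 1).toNat + 1 := by omega
    rw [this, Function.iterate_succ_apply', hG'G]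

lemma T_add (hGG' : ∀ x, G (G' x) = x) (hG'G : ∀ x, G' (G x) = x)
    (m n : ℤ) (x : ℝ) : T G G' (m + n) x = T G G' m (T G G' n x) := by
  induction m using Int.induction_on with
  | zero => simp [T_zero]
  | succ i hi =>
      have h1 : (i : ℤ) + 1 + n = (i + n) + 1 := by ring
      rw [h1, T_succ hGG', hi, ← T_succ hGG']
  | pred i hi =>
      have h1 : (-(i:ℤ) - 1) + n = (-(i:ℤ) + n) - 1 := by ring
      rw [h1, T_pred hG'G, hi, ← T_pred hG'G]

lemma T_strictMono (hG : StrictMono G) (hG' : StrictMono G') (n : ℤ) :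
    StrictMono (T G G' n) := fun _ _ h => (hG.iterate _) ((hG'.iterate _) h)

lemma T_fixed {a : ℝ} (ha : G a = a) (ha' : G' a = a) (n : ℤ) : T G G' n a = a := by
  simp [T, Function.iterate_fixed ha', Function.iterate_fixed ha]

lemma iterate_mem_Ioo {a b : ℝ} {F : ℝ → ℝ} (hF : ∀ x ∈ Ioo a b, F x ∈ Ioo a b)
    {x : ℝ} (hx : x ∈ Ioo a b) (k : ℕ) : F^[k] x ∈ Ioo a b := by
  induction k with
  | zero => simpa
  | succ k ih => rw [Function.iterate_succ_apply']; exact hF _ ih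

lemma T_mem_Ioo {a b : ℝ} (hG : ∀ x ∈ Ioo a b, G x ∈ Ioo a b)
    (hG' : ∀ x ∈ Ioo a b, G' x ∈ Ioo a b) {x : ℝ} (hx : x ∈ Ioo a b) (n : ℤ) :
    T G G' n x ∈ Ioo a b :=
  iterate_mem_Ioo hG (iterate_mem_Ioo hG' hx _) _


open Filter Topology

/-- Forward iterates from an interior point escape to the right endpoint. -/
lemma escape_up {G : ℝ → ℝ} {a b x₀ : ℝ}
    (hGm : StrictMono G) (hGsurj : Function.Surjective G)
    (hGa : G a = a) (hGb : G b = b) (hgt : ∀ x ∈ Ioo a b, x < G x)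
    (hx₀ : x₀ ∈ Ioo a b) : ∀ y < b, ∃ k : ℕ, y < G^[k] x₀ := by
  have hinv : ∀ x ∈ Ioo a b, G x ∈ Ioo a b := by
    intro x hx
    exact ⟨by rw [← hGa]; exact hGm hx.1, by rw [← hGb]; exact hGm hx.2⟩
  set u : ℕ → ℝ := fun k => G^[k] x₀ with hu
  have humem : ∀ k, u k ∈ Ioo a b := fun k => iterate_mem_Ioo hinv hx₀ k
  have husucc : ∀ k, u (k + 1) = G (u k) := fun k => Function.iterate_succ_apply' G k x₀
  have humono : Monotone u := monotone_nat_of_le_succ fun k => by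
    rw [husucc]; exact (hgt _ (humem k)).le
  have hbdd : BddAbove (range u) := ⟨b, by rintro _ ⟨k, rfl⟩; exact (humem k).2.le⟩
  set L := ⨆ k, u k with hL
  have htend : Tendsto u atTop (𝓝 L) := tendsto_atTop_ciSup humono hbdd
  have hGc : Continuous G := hGm.monotone.continuous_of_surjective hGsurj
  have htend2 : Tendsto (fun k => u (k + 1)) atTop (𝓝 L) :=
    htend.comp (tendsto_add_atTop_nat 1)
  have htend3 : Tendsto (fun k => G (u k)) atTop (𝓝 (G L)) :=
    (hGc.tendsto L).comp htend
  have hGL : G L = L := by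
    refine tendsto_nhds_unique htend3 (by simpa [husucc] using htend2)
  have hLb : L ≤ b := ciSup_le fun k => (humem k).2.le
  have hLa : a < L := lt_of_lt_of_le (humem 0).1 (le_ciSup hbdd 0)
  have hLeq : L = b := by
    rcases eq_or_lt_of_le hLb with h | h
    · exact h
    · exact absurd hGL (ne_of_gt (hgt L ⟨hLa, h⟩))
  intro y hy
  have : y < ⨆ k, u k := by rw [← hL, hLeq]; exact hy
  exact exists_lt_of_lt_ciSup this

/-- Backward iterates from an interior point escape to the left endpoint. -/
lemma escape_down {G : ℝ → ℝ} {a b x₀ : ℝ}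
    (hGm : StrictMono G) (hGsurj : Function.Surjective G)
    (hGa : G a = a) (hGb : G b = b) (hlt : ∀ x ∈ Ioo a b, G x < x)
    (hx₀ : x₀ ∈ Ioo a b) : ∀ y, a < y → ∃ k : ℕ, G^[k] x₀ < y := by
  have hinv : ∀ x ∈ Ioo a b, G x ∈ Ioo a b := by
    intro x hx
    exact ⟨by rw [← hGa]; exact hGm hx.1, by rw [← hGb]; exact hGm hx.2⟩
  set u : ℕ → ℝ := fun k => G^[k] x₀ with hu
  have humem : ∀ k, u k ∈ Ioo a b := fun k => iterate_mem_Ioo hinv hx₀ k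
  have husucc : ∀ k, u (k + 1) = G (u k) := fun k => Function.iterate_succ_apply' G k x₀
  have humono : Antitone u := antitone_nat_of_succ_le fun k => by
    rw [husucc]; exact (hlt _ (humem k)).le
  have hbdd : BddBelow (range u) := ⟨a, by rintro _ ⟨k, rfl⟩; exact (humem k).1.le⟩
  set L := ⨅ k, u k with hL
  have htend : Tendsto u atTop (𝓝 L) := tendsto_atTop_ciInf humono hbdd
  have hGc : Continuous G := hGm.monotone.continuous_of_surjective hGsurj
  have htend2 : Tendsto (fun k => u (k + 1)) atTop (𝓝 L) :=
    htend.comp (tendsto_add_atTop_nat 1)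
  have htend3 : Tendsto (fun k => G (u k)) atTop (𝓝 (G L)) :=
    (hGc.tendsto L).comp htend
  have hGL : G L = L := by
    refine tendsto_nhds_unique htend3 (by simpa [husucc] using htend2)
  have hLa : a ≤ L := le_ciInf fun k => (humem k).1.le
  have hLb : L < b := lt_of_le_of_lt (ciInf_le hbdd 0) (humem 0).2
  have hLeq : L = a := by
    rcases eq_or_lt_of_le hLa with h | h
    · exact h.symm
    · exact absurd hGL (ne_of_lt (hlt L ⟨h, hLb⟩))
  intro y hy
  have : ⨅ k, u k < y := by rw [← hL, hLeq]; exact hy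
  exact exists_lt_of_ciInf_lt this

lemma inv_strictMono {G G' : ℝ → ℝ} (hGm : StrictMono G) (hGG' : ∀ x, G (G' x) = x) :
    StrictMono G' := by
  intro x y h
  by_contra hc
  push_neg at hc
  have := hGm.monotone hc
  rw [hGG', hGG'] at this
  exact absurd h (not_lt.2 this)

lemma inv_fixed {G G' : ℝ → ℝ} {a : ℝ} (hG'G : ∀ x, G' (G x) = x) (hGa : G a = a) :
    G' a = a := by conv_lhs => rw [← hGa, hG'G]

lemma mapsIoo {G : ℝ → ℝ} {a b : ℝ} (hGm : StrictMono G) (hGa : G a = a) (hGb : G b = b) :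
    ∀ x ∈ Ioo a b, G x ∈ Ioo a b := fun x hx =>
  ⟨by rw [← hGa]; exact hGm hx.1, by rw [← hGb]; exact hGm hx.2⟩

lemma inv_lt {G G' : ℝ → ℝ} {a b : ℝ} (hGm : StrictMono G)
    (hGG' : ∀ x, G (G' x) = x) (hG'G : ∀ x, G' (G x) = x)
    (hGa : G a = a) (hGb : G b = b) (hGgt : ∀ x ∈ Ioo a b, x < G x) :
    ∀ x ∈ Ioo a b, G' x < x := by
  intro x hx
  have hmem : G' x ∈ Ioo a b :=
    mapsIoo (inv_strictMono hGm hGG') (inv_fixed hG'G hGa) (inv_fixed hG'G hGb) x hx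
  have := hGgt (G' x) hmem
  rwa [hGG'] at this

/-- Existence of the fundamental-domain index. -/
lemma fund_exists {G G' : ℝ → ℝ} {a b x₀ : ℝ}
    (hGm : StrictMono G) (hGG' : ∀ x, G (G' x) = x) (hG'G : ∀ x, G' (G x) = x)
    (hGa : G a = a) (hGb : G b = b) (hGgt : ∀ x ∈ Ioo a b, x < G x)
    (hx₀ : x₀ ∈ Ioo a b) :
    ∀ x ∈ Ioo a b, ∃ n : ℤ, T G G' n x₀ ≤ x ∧ x < T G G' (n + 1) x₀ := by
  intro x hx
  have hG'm : StrictMono G' := inv_strictMono hGm hGG'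
  have hG'a : G' a = a := inv_fixed hG'G hGa
  have hG'b : G' b = b := inv_fixed hG'G hGb
  have hG'lt : ∀ x ∈ Ioo a b, G' x < x := inv_lt hGm hGG' hG'G hGa hGb hGgt
  set u : ℤ → ℝ := fun n => T G G' n x₀ with hu
  have humem : ∀ n, u n ∈ Ioo a b := fun n =>
    T_mem_Ioo (mapsIoo hGm hGa hGb) (mapsIoo hG'm hG'a hG'b) hx₀ n
  have humono : StrictMono u := strictMono_int_of_lt_succ fun n => by
    rw [hu]; simp only; rw [T_succ hGG']; exact hGgt _ (humem n)
  obtain ⟨kb, hkb⟩ := escape_up hGm (fun y => ⟨G' y, hGG' y⟩) hGa hGb hGgt hx₀ x hx.2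
  obtain ⟨ka, hka⟩ := escape_down hG'm (fun y => ⟨G y, hG'G y⟩) hG'a hG'b hG'lt hx₀ x hx.1
  have hub : u (kb : ℤ) = G^[kb] x₀ := by
    rw [hu]; simp only; rw [T_of_nonneg (by positivity)]; norm_num
  have hua : u (-(ka : ℤ)) = G'^[ka] x₀ := by
    rw [hu]; simp only; rw [T_of_nonpos (by omega)]; norm_num
  obtain ⟨n, hn, hmax⟩ := Int.exists_greatest_of_bdd (P := fun n => u n ≤ x)
    ⟨(kb : ℤ), fun z hz => by
      by_contra hzz
      push_neg at hzz
      have : u (kb : ℤ) ≤ u z := humono.monotone hzz.le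
      rw [hub] at this
      exact absurd (lt_of_lt_of_le hkb (le_trans this hz)) (lt_irrefl x)⟩
    ⟨-(ka : ℤ), by show u (-(ka:ℤ)) ≤ x; rw [hua]; exact hka.le⟩
  refine ⟨n, hn, ?_⟩
  by_contra hc
  push_neg at hc
  have := hmax (n + 1) hc
  omega

/-- The fundamental-domain representative lies in `[x₀, G x₀)`. -/
lemma fund_mem {G G' : ℝ → ℝ} {x₀ : ℝ}
    (hGm : StrictMono G) (hGG' : ∀ x, G (G' x) = x) (hG'G : ∀ x, G' (G x) = x)
    {x : ℝ} {n : ℤ} (h1 : T G G' n x₀ ≤ x) (h2 : x < T G G' (n + 1) x₀) :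
    T G G' (-n) x ∈ Ico x₀ (G x₀) := by
  have hG'm : StrictMono G' := inv_strictMono hGm hGG'
  have hmono := T_strictMono hGm hG'm (G := G) (G' := G') (-n)
  constructor
  · have := hmono.monotone h1
    rwa [← T_add hGG' hG'G, neg_add_cancel, T_zero] at this
  · have := hmono h2
    rwa [← T_add hGG' hG'G, (by ring : -n + (n + 1) = 1),
      (by rw [(by ring : (1:ℤ) = 0 + 1), T_succ hGG', T_zero] : T G G' 1 x₀ = G x₀)] at this

lemma T_one {F F' : ℝ → ℝ} (hFF' : ∀ x, F (F' x) = x) (z : ℝ) : T F F' 1 z = F z := by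
  rw [show (1:ℤ) = 0 + 1 by norm_num, T_succ hFF', T_zero]

/-- Core conjugation lemma. -/
lemma conjCoreGlobal {G G' H H' : ℝ → ℝ} {a b c d : ℝ}
    (hab : a < b) (hcd : c < d)
    (hGm : StrictMono G) (hGG' : ∀ x, G (G' x) = x) (hG'G : ∀ x, G' (G x) = x)
    (hGa : G a = a) (hGb : G b = b) (hGgt : ∀ x ∈ Ioo a b, x < G x)
    (hHm : StrictMono H) (hHH' : ∀ x, H (H' x) = x) (hH'H : ∀ x, H' (H x) = x)
    (hHc : H c = c) (hHd : H d = d) (hHgt : ∀ x ∈ Ioo c d, x < H x) :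
    ∃ φ : ℝ → ℝ, StrictMonoOn φ (Icc a b) ∧ MapsTo φ (Icc a b) (Icc c d) ∧
      SurjOn φ (Icc a b) (Icc c d) ∧ φ a = c ∧ φ b = d ∧
      ∀ x ∈ Icc a b, φ (G x) = H (φ x) := by
  have hG'm : StrictMono G' := inv_strictMono hGm hGG'
  have hH'm : StrictMono H' := inv_strictMono hHm hHH'
  set x₀ : ℝ := (a + b) / 2 with hx₀def
  set y₀ : ℝ := (c + d) / 2 with hy₀def
  have hx₀ : x₀ ∈ Ioo a b := ⟨by rw [hx₀def]; linarith, by rw [hx₀def]; linarith⟩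
  have hy₀ : y₀ ∈ Ioo c d := ⟨by rw [hy₀def]; linarith, by rw [hy₀def]; linarith⟩
  set u : ℤ → ℝ := fun n => T G G' n x₀ with hu
  set v : ℤ → ℝ := fun n => T H H' n y₀ with hv
  have humem : ∀ n, u n ∈ Ioo a b := fun n =>
    T_mem_Ioo (mapsIoo hGm hGa hGb)
      (mapsIoo hG'm (inv_fixed hG'G hGa) (inv_fixed hG'G hGb)) hx₀ n
  have hvmem : ∀ n, v n ∈ Ioo c d := fun n =>
    T_mem_Ioo (mapsIoo hHm hHc hHd)
      (mapsIoo hH'm (inv_fixed hH'H hHc) (inv_fixed hH'H hHd)) hy₀ n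
  have humono : StrictMono u := strictMono_int_of_lt_succ fun n => by
    rw [hu]; simp only; rw [T_succ hGG']; exact hGgt _ (humem n)
  have hvmono : StrictMono v := strictMono_int_of_lt_succ fun n => by
    rw [hv]; simp only; rw [T_succ hHH']; exact hHgt _ (hvmem n)
  have hNex := fund_exists hGm hGG' hG'G hGa hGb hGgt hx₀
  have hMex := fund_exists hHm hHH' hH'H hHc hHd hHgt hy₀
  have hNuniq : ∀ x, ∀ m n : ℤ, u m ≤ x → x < u (m + 1) → u n ≤ x → x < u (n + 1) →
      m = n := by
    intro x m n hm1 hm2 hn1 hn2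
    by_contra hne
    rcases lt_or_gt_of_ne hne with hlt | hlt
    · exact absurd (le_trans (humono.monotone (by omega : m + 1 ≤ n)) hn1)
        (not_le.2 hm2)
    · exact absurd (le_trans (humono.monotone (by omega : n + 1 ≤ m)) hm1)
        (not_le.2 hn2)
  set N : ℝ → ℤ := fun x => if hx : x ∈ Ioo a b then (hNex x hx).choose else 0 with hNdef
  have hN : ∀ x (hx : x ∈ Ioo a b), u (N x) ≤ x ∧ x < u (N x + 1) := by
    intro x hx
    rw [hNdef]; simp only [dif_pos hx]
    exact (hNex x hx).choose_spec
  -- the affine identification of fundamental domains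
  have hGx₀ : x₀ < G x₀ := hGgt _ hx₀
  have hHy₀ : y₀ < H y₀ := hHgt _ hy₀
  have hne : G x₀ - x₀ ≠ 0 := by linarith
  set s : ℝ := (H y₀ - y₀) / (G x₀ - x₀) with hs_def
  have hs : 0 < s := div_pos (by linarith) (by linarith)
  have hsne : s ≠ 0 := ne_of_gt hs
  set A : ℝ → ℝ := fun t => y₀ + (t - x₀) * s with hA_def
  set A' : ℝ → ℝ := fun t => x₀ + (t - y₀) / s with hA'_def
  have hA0 : A x₀ = y₀ := by rw [hA_def]; simp
  have hA1 : A (G x₀) = H y₀ := by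
    rw [hA_def]; simp only [hs_def]
    field_simp
    ring
  have hAm : StrictMono A := fun t₁ t₂ h => by
    rw [hA_def]; simp only
    have := mul_lt_mul_of_pos_right (sub_lt_sub_right h x₀) hs
    linarith
  have hA'm : StrictMono A' := fun t₁ t₂ h => by
    rw [hA'_def]; simp only
    have : (t₁ - y₀) / s < (t₂ - y₀) / s := by
      rw [div_lt_div_iff₀ hs hs]
      nlinarith
    linarith
  have hA'A : ∀ t, A' (A t) = t := by
    intro t; rw [hA_def, hA'_def]; simp only
    field_simp
    ring
  have hAA' : ∀ t, A (A' t) = t := by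
    intro t; rw [hA_def, hA'_def]; simp only
    field_simp
    ring
  have hA'0 : A' y₀ = x₀ := by rw [hA'_def]; simp
  have hA'1 : A' (H y₀) = G x₀ := by rw [← hA1, hA'A]
  have hAmap : ∀ t ∈ Ico x₀ (G x₀), A t ∈ Ico y₀ (H y₀) := by
    intro t ht
    exact ⟨by rw [← hA0]; exact hAm.monotone ht.1, by rw [← hA1]; exact hAm ht.2⟩
  -- the conjugating map
  set φ : ℝ → ℝ := fun x =>
    if hx : x ∈ Ioo a b then T H H' (N x) (A (T G G' (-(N x)) x))
    else if x ≤ a then c else d with hφdef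
  have hφval : ∀ x (hx : x ∈ Ioo a b), φ x = T H H' (N x) (A (T G G' (-(N x)) x)) := by
    intro x hx; rw [hφdef]; simp only [dif_pos hx]
  have hφa : φ a = c := by
    rw [hφdef]; simp only [dif_neg (fun h : a ∈ Ioo a b => lt_irrefl a h.1)]
    rw [if_pos le_rfl]
  have hφb : φ b = d := by
    rw [hφdef]; simp only [dif_neg (fun h : b ∈ Ioo a b => lt_irrefl b h.2)]
    rw [if_neg (not_le.2 hab)]
  -- key range estimates
  have hfrac : ∀ x (hx : x ∈ Ioo a b), T G G' (-(N x)) x ∈ Ico x₀ (G x₀) := fun x hx =>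
    fund_mem hGm hGG' hG'G (hN x hx).1 (hN x hx).2
  have hw : ∀ x (hx : x ∈ Ioo a b), φ x ∈ Ico (v (N x)) (v (N x + 1)) := by
    intro x hx
    rw [hφval x hx]
    have ht := hAmap _ (hfrac x hx)
    constructor
    · exact (T_strictMono hHm hH'm (N x)).monotone ht.1
    · have h2 : T H H' (N x) (A (T G G' (-(N x)) x)) < T H H' (N x) (H y₀) :=
        T_strictMono hHm hH'm (N x) ht.2
      have h3 : T H H' (N x) (H y₀) = v (N x + 1) := by
        rw [hv]; simp only
        rw [T_add hHH' hH'H (N x) 1 y₀, T_one hHH']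
      exact h3 ▸ h2
  have hφIoo : ∀ x (hx : x ∈ Ioo a b), φ x ∈ Ioo c d := fun x hx =>
    ⟨lt_of_lt_of_le (hvmem (N x)).1 (hw x hx).1,
     lt_trans (hw x hx).2 (hvmem (N x + 1)).2⟩
  have hNle : ∀ x y, x ∈ Ioo a b → y ∈ Ioo a b → x ≤ y → N x ≤ N y := by
    intro x y hx hy hxy
    by_contra hc
    push_neg at hc
    exact absurd (le_trans (le_trans (humono.monotone (by omega : N y + 1 ≤ N x))
      (hN x hx).1) hxy) (not_le.2 (hN y hy).2)
  have hφmono' : ∀ x y, x ∈ Ioo a b → y ∈ Ioo a b → x < y → φ x < φ y := by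
    intro x y hx hy hxy
    rcases eq_or_lt_of_le (hNle x y hx hy hxy.le) with he | hlt
    · rw [hφval x hx, hφval y hy, ← he]
      exact T_strictMono hHm hH'm _ (hAm (T_strictMono hGm hG'm _ hxy))
    · calc φ x < v (N x + 1) := (hw x hx).2
        _ ≤ v (N y) := hvmono.monotone (by omega)
        _ ≤ φ y := (hw y hy).1
  have hφmono : StrictMonoOn φ (Icc a b) := by
    intro x hx y hy hxy
    rcases eq_or_lt_of_le hx.1 with hxa | hxa
    · rw [← hxa, hφa]
      rcases eq_or_lt_of_le hy.2 with hyb | hyb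
      · rw [hyb, hφb]; exact hcd
      · exact (hφIoo y ⟨hxa ▸ hxy, hyb⟩).1
    · have hxI : x ∈ Ioo a b := ⟨hxa, lt_of_lt_of_le hxy hy.2⟩
      rcases eq_or_lt_of_le hy.2 with hyb | hyb
      · rw [hyb, hφb]; exact (hφIoo x hxI).2
      · exact hφmono' x y hxI ⟨lt_trans hxa hxy, hyb⟩ hxy
  have hφmaps : MapsTo φ (Icc a b) (Icc c d) := by
    intro x hx
    rcases eq_or_lt_of_le hx.1 with hxa | hxa
    · rw [← hxa, hφa]; exact ⟨le_rfl, hcd.le⟩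
    rcases eq_or_lt_of_le hx.2 with hxb | hxb
    · rw [hxb, hφb]; exact ⟨hcd.le, le_rfl⟩
    · have := hφIoo x ⟨hxa, hxb⟩; exact ⟨this.1.le, this.2.le⟩
  have hφsurj : SurjOn φ (Icc a b) (Icc c d) := by
    intro y hy
    rcases eq_or_lt_of_le hy.1 with hyc | hyc
    · exact ⟨a, ⟨le_rfl, hab.le⟩, by rw [hφa]; exact hyc⟩
    rcases eq_or_lt_of_le hy.2 with hyd | hyd
    · exact ⟨b, ⟨hab.le, le_rfl⟩, by rw [hφb, hyd]⟩
    · have hyI : y ∈ Ioo c d := ⟨hyc, hyd⟩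
      obtain ⟨m, hm1, hm2⟩ := hMex y hyI
      have ht : T H H' (-m) y ∈ Ico y₀ (H y₀) := fund_mem hHm hHH' hH'H hm1 hm2
      set t := T H H' (-m) y with htdef
      have hA't : A' t ∈ Ico x₀ (G x₀) := by
        constructor
        · rw [← hA'0]; exact hA'm.monotone ht.1
        · rw [← hA'1]; exact hA'm ht.2
      set z := T G G' m (A' t) with hzdef
      have hz1 : u m ≤ z := (T_strictMono hGm hG'm m).monotone hA't.1
      have hz2 : z < u (m + 1) := by
        have h4 : z < T G G' m (G x₀) := T_strictMono hGm hG'm m hA't.2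
        have h5 : T G G' m (G x₀) = u (m + 1) := by
          rw [hu]; simp only
          rw [T_add hGG' hG'G m 1 x₀, T_one hGG']
        exact h5 ▸ h4
      have hzI : z ∈ Ioo a b :=
        ⟨lt_of_lt_of_le (humem m).1 hz1, lt_trans hz2 (humem (m + 1)).2⟩
      have hNz : N z = m := hNuniq z (N z) m (hN z hzI).1 (hN z hzI).2 hz1 hz2
      refine ⟨z, ⟨hzI.1.le, hzI.2.le⟩, ?_⟩
      rw [hφval z hzI, hNz]
      have h1 : T G G' (-m) z = A' t := by
        rw [hzdef, ← T_add hGG' hG'G, (by ring : -m + m = 0), T_zero]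
      rw [h1, hAA', htdef, ← T_add hHH' hH'H, (by ring : m + -m = 0), T_zero]
  have hNG : ∀ x (hx : x ∈ Ioo a b), N (G x) = N x + 1 := by
    intro x hx
    have hGxI : G x ∈ Ioo a b := mapsIoo hGm hGa hGb x hx
    have h1 : u (N x + 1) ≤ G x := by
      have h := hGm.monotone (hN x hx).1
      rwa [show G (u (N x)) = u (N x + 1) from (T_succ hGG' _ _).symm] at h
    have h2 : G x < u (N x + 1 + 1) := by
      have h := hGm (hN x hx).2
      rwa [show G (u (N x + 1)) = u (N x + 1 + 1) from (T_succ hGG' _ _).symm] at h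
    exact hNuniq (G x) (N (G x)) (N x + 1) (hN _ hGxI).1 (hN _ hGxI).2 h1 h2
  have hconj : ∀ x ∈ Icc a b, φ (G x) = H (φ x) := by
    intro x hx
    rcases eq_or_lt_of_le hx.1 with hxa | hxa
    · rw [← hxa, hGa, hφa, hHc]
    rcases eq_or_lt_of_le hx.2 with hxb | hxb
    · rw [hxb, hGb, hφb, hHd]
    · have hxI : x ∈ Ioo a b := ⟨hxa, hxb⟩
      have hGxI : G x ∈ Ioo a b := mapsIoo hGm hGa hGb x hxI
      rw [hφval _ hGxI, hφval _ hxI, hNG x hxI]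
      have h1 : T G G' (-(N x + 1)) (G x) = T G G' (-(N x)) x := by
        rw [show G x = T G G' 1 x from (T_one hGG' x).symm, ← T_add hGG' hG'G]
        congr 1; ring
      rw [h1, T_succ hHH']
  exact ⟨φ, hφmono, hφmaps, hφsurj, hφa, hφb, hconj⟩

/-- Extend a self-map of `[a,b]` by the identity. -/
noncomputable def extend (g : ℝ → ℝ) (a b : ℝ) : ℝ → ℝ := fun x =>
  if x ∈ Icc a b then g x else x

lemma extend_eq {g : ℝ → ℝ} {a b x : ℝ} (hx : x ∈ Icc a b) : extend g a b x = g x :=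
  if_pos hx

lemma extend_strictMono {g : ℝ → ℝ} {a b : ℝ}
    (hgm : StrictMonoOn g (Icc a b)) (hmaps : MapsTo g (Icc a b) (Icc a b)) :
    StrictMono (extend g a b) := by
  intro x y hxy
  by_cases hx : x ∈ Icc a b <;> by_cases hy : y ∈ Icc a b <;>
    unfold extend <;> simp only [if_pos, if_neg, hx, hy, if_true, if_false]
  · exact hgm hx hy hxy
  · have hby : b < y := by
      have h' : a ≤ y → b < y := by simpa [mem_Icc] using hy
      exact h' (le_trans hx.1 hxy.le)
    exact lt_of_le_of_lt (hmaps hx).2 hby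
  · have hxa : x < a := by
      by_contra hcon
      push_neg at hcon
      have h' : a ≤ x → b < x := by simpa [mem_Icc] using hx
      exact absurd (lt_of_lt_of_le (h' hcon) (le_trans hxy.le hy.2)) (lt_irrefl b)
    exact lt_of_lt_of_le hxa (hmaps hy).1
  · exact hxy

lemma extend_inv {g e : ℝ → ℝ} {a b : ℝ}
    (hmapsg : MapsTo g (Icc a b) (Icc a b))
    (hinv : ∀ x ∈ Icc a b, e (g x) = x) :
    ∀ x, extend e a b (extend g a b x) = x := by
  intro x
  by_cases hx : x ∈ Icc a b
  · rw [extend_eq hx, extend_eq (hmapsg hx)]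
    exact hinv x hx
  · unfold extend; rw [if_neg hx, if_neg hx]

lemma invOn_mapsTo {g e : ℝ → ℝ} {a b : ℝ}
    (hgB : BijOn g (Icc a b) (Icc a b)) (hge : InvOn e g (Icc a b) (Icc a b)) :
    MapsTo e (Icc a b) (Icc a b) := by
  intro y hy
  obtain ⟨x, hx, rfl⟩ := hgB.surjOn hy
  rw [hge.1 hx]
  exact hx

lemma invOn_strictMonoOn {g e : ℝ → ℝ} {a b : ℝ}
    (hgm : StrictMonoOn g (Icc a b)) (hgB : BijOn g (Icc a b) (Icc a b))
    (hge : InvOn e g (Icc a b) (Icc a b)) :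
    StrictMonoOn e (Icc a b) := by
  intro y₁ hy₁ y₂ hy₂ h
  by_contra hc
  push_neg at hc
  have := hgm.monotoneOn (invOn_mapsTo hgB hge hy₂) (invOn_mapsTo hgB hge hy₁) hc
  rw [hge.2 hy₁, hge.2 hy₂] at this
  exact absurd h (not_lt.2 this)

lemma invOn_fixed {g e : ℝ → ℝ} {a b p : ℝ} (hp : p ∈ Icc a b)
    (hge : InvOn e g (Icc a b) (Icc a b)) (hgp : g p = p) : e p = p := by
  conv_lhs => rw [← hgp, hge.1 hp]

lemma invOn_mem_Ioo {g e : ℝ → ℝ} {a b : ℝ}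
    (hgB : BijOn g (Icc a b) (Icc a b)) (hge : InvOn e g (Icc a b) (Icc a b))
    (hga : g a = a) (hgb : g b = b) {x : ℝ} (hx : x ∈ Ioo a b) : e x ∈ Ioo a b := by
  have hxI : x ∈ Icc a b := ⟨hx.1.le, hx.2.le⟩
  have hm := invOn_mapsTo hgB hge hxI
  rcases eq_or_lt_of_le hm.1 with h1 | h1
  · exfalso
    have : g (e x) = x := hge.2 hxI
    rw [← h1, hga] at this
    exact absurd this.symm (ne_of_gt hx.1)
  rcases eq_or_lt_of_le hm.2 with h2 | h2
  · exfalso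
    have : g (e x) = x := hge.2 hxI
    rw [h2, hgb] at this
    exact absurd this (ne_of_gt hx.2)
  · exact ⟨h1, h2⟩

/-- The gap conjugation lemma: two strictly increasing bijections of compact intervals,
fixing only the endpoints and with matching (strict) sign of displacement on the
interior, are conjugate by an increasing homeomorphism of the intervals. -/
lemma conjGap {g e h i : ℝ → ℝ} {a b c d : ℝ} (hab : a < b) (hcd : c < d)
    (hgm : StrictMonoOn g (Icc a b)) (hgB : BijOn g (Icc a b) (Icc a b))
    (hge : InvOn e g (Icc a b) (Icc a b)) (hga : g a = a) (hgb : g b = b)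
    (hhm : StrictMonoOn h (Icc c d)) (hhB : BijOn h (Icc c d) (Icc c d))
    (hhi : InvOn i h (Icc c d) (Icc c d)) (hhc : h c = c) (hhd : h d = d)
    (hsign : ((∀ x ∈ Ioo a b, x < g x) ∧ (∀ y ∈ Ioo c d, y < h y)) ∨
             ((∀ x ∈ Ioo a b, g x < x) ∧ (∀ y ∈ Ioo c d, h y < y))) :
    ∃ φ : ℝ → ℝ, StrictMonoOn φ (Icc a b) ∧ MapsTo φ (Icc a b) (Icc c d) ∧
      SurjOn φ (Icc a b) (Icc c d) ∧ φ a = c ∧ φ b = d ∧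
      ∀ x ∈ Icc a b, φ (g x) = h (φ x) := by
  have haI : a ∈ Icc a b := ⟨le_rfl, hab.le⟩
  have hbI : b ∈ Icc a b := ⟨hab.le, le_rfl⟩
  have hcI : c ∈ Icc c d := ⟨le_rfl, hcd.le⟩
  have hdI : d ∈ Icc c d := ⟨hcd.le, le_rfl⟩
  have hea : e a = a := invOn_fixed haI hge hga
  have heb : e b = b := invOn_fixed hbI hge hgb
  have hic : i c = c := invOn_fixed hcI hhi hhc
  have hid : i d = d := invOn_fixed hdI hhi hhd
  have hGm : StrictMono (extend g a b) := extend_strictMono hgm hgB.mapsTo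
  have hEm : StrictMono (extend e a b) :=
    extend_strictMono (invOn_strictMonoOn hgm hgB hge) (invOn_mapsTo hgB hge)
  have hHm : StrictMono (extend h c d) := extend_strictMono hhm hhB.mapsTo
  have hIm : StrictMono (extend i c d) :=
    extend_strictMono (invOn_strictMonoOn hhm hhB hhi) (invOn_mapsTo hhB hhi)
  have hGE : ∀ x, extend g a b (extend e a b x) = x :=
    extend_inv (invOn_mapsTo hgB hge) (fun x hx => hge.2 hx)
  have hEG : ∀ x, extend e a b (extend g a b x) = x :=
    extend_inv hgB.mapsTo (fun x hx => hge.1 hx)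
  have hHI : ∀ x, extend h c d (extend i c d x) = x :=
    extend_inv (invOn_mapsTo hhB hhi) (fun x hx => hhi.2 hx)
  have hIH : ∀ x, extend i c d (extend h c d x) = x :=
    extend_inv hhB.mapsTo (fun x hx => hhi.1 hx)
  have hGa : extend g a b a = a := by rw [extend_eq haI, hga]
  have hGb : extend g a b b = b := by rw [extend_eq hbI, hgb]
  have hEa : extend e a b a = a := by rw [extend_eq haI, hea]
  have hEb : extend e a b b = b := by rw [extend_eq hbI, heb]
  have hHc : extend h c d c = c := by rw [extend_eq hcI, hhc]
  have hHd : extend h c d d = d := by rw [extend_eq hdI, hhd]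
  have hIc : extend i c d c = c := by rw [extend_eq hcI, hic]
  have hId : extend i c d d = d := by rw [extend_eq hdI, hid]
  rcases hsign with ⟨hg1, hh1⟩ | ⟨hg1, hh1⟩
  · have hGgt : ∀ x ∈ Ioo a b, x < extend g a b x := fun x hx => by
      rw [extend_eq (Ioo_subset_Icc_self hx)]; exact hg1 x hx
    have hHgt : ∀ y ∈ Ioo c d, y < extend h c d y := fun y hy => by
      rw [extend_eq (Ioo_subset_Icc_self hy)]; exact hh1 y hy
    obtain ⟨φ, h1, h2, h3, h4, h5, h6⟩ :=
      conjCoreGlobal hab hcd hGm hGE hEG hGa hGb hGgt hHm hHI hIH hHc hHd hHgt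
    refine ⟨φ, h1, h2, h3, h4, h5, fun x hx => ?_⟩
    have := h6 x hx
    rwa [extend_eq hx, extend_eq (h2 hx)] at this
  · have hEgt : ∀ x ∈ Ioo a b, x < extend e a b x := fun x hx => by
      rw [extend_eq (Ioo_subset_Icc_self hx)]
      have hm := invOn_mem_Ioo hgB hge hga hgb hx
      have := hg1 (e x) hm
      rwa [hge.2 (Ioo_subset_Icc_self hx)] at this
    have hIgt : ∀ y ∈ Ioo c d, y < extend i c d y := fun y hy => by
      rw [extend_eq (Ioo_subset_Icc_self hy)]
      have hm := invOn_mem_Ioo hhB hhi hhc hhd hy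
      have := hh1 (i y) hm
      rwa [hhi.2 (Ioo_subset_Icc_self hy)] at this
    obtain ⟨φ, h1, h2, h3, h4, h5, h6⟩ :=
      conjCoreGlobal hab hcd hEm hEG hGE hEa hEb hEgt hIm hIH hHI hIc hId hIgt
    refine ⟨φ, h1, h2, h3, h4, h5, fun x hx => ?_⟩
    have hgx : g x ∈ Icc a b := hgB.mapsTo hx
    have := h6 (g x) hgx
    rw [extend_eq hgx, hge.1 hx, extend_eq (h2 hgx)] at this
    rw [this]
    exact (hhi.2 (h2 hgx)).symm

/-! ### Dynamics of monotone interval maps -/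

lemma fix_left {f : ℝ → ℝ} {l r : ℝ} (hlr : l ≤ r)
    (hfm : StrictMonoOn f (Icc l r)) (hfB : BijOn f (Icc l r) (Icc l r)) : f l = l := by
  have hl : l ∈ Icc l r := ⟨le_rfl, hlr⟩
  obtain ⟨x, hx, hfx⟩ := hfB.surjOn hl
  have h1 : f l ≤ f x := hfm.monotoneOn hl hx hx.1
  rw [hfx] at h1
  exact le_antisymm h1 (hfB.mapsTo hl).1

lemma fix_right {f : ℝ → ℝ} {l r : ℝ} (hlr : l ≤ r)
    (hfm : StrictMonoOn f (Icc l r)) (hfB : BijOn f (Icc l r) (Icc l r)) : f r = r := by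
  have hr : r ∈ Icc l r := ⟨hlr, le_rfl⟩
  obtain ⟨x, hx, hfx⟩ := hfB.surjOn hr
  have h1 : f x ≤ f r := hfm.monotoneOn hx hr hx.2
  rw [hfx] at h1
  exact le_antisymm (hfB.mapsTo hr).2 h1

/-- On a gap without fixed points, the displacement has constant sign. -/
lemma signConst {f : ℝ → ℝ} {l r α β : ℝ} (hαβ : α < β) (hsub : Icc α β ⊆ Icc l r)
    (hfc : ContinuousOn f (Icc l r)) (hnofix : ∀ x ∈ Ioo α β, f x ≠ x) :
    (∀ x ∈ Ioo α β, x < f x) ∨ (∀ x ∈ Ioo α β, f x < x) := by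
  by_contra hc
  push_neg at hc
  obtain ⟨⟨x, hx, hx2⟩, ⟨y, hy, hy2⟩⟩ := hc
  have hx2' : f x < x := lt_of_le_of_ne hx2 (hnofix x hx)
  have hy2' : y < f y := lt_of_le_of_ne hy2 (fun h => hnofix y hy h.symm)
  set g : ℝ → ℝ := fun t => f t - t with hg
  have hgc : ContinuousOn g (Icc l r) := hfc.sub continuousOn_id
  have hIoosub : Ioo α β ⊆ Icc l r := fun t ht => hsub ⟨ht.1.le, ht.2.le⟩
  rcases le_total x y with hxy | hxy
  · have hsub2 : Icc x y ⊆ Icc l r := fun t ht =>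
      hsub ⟨le_trans hx.1.le ht.1, le_trans ht.2 hy.2.le⟩
    have h0 : (0:ℝ) ∈ Icc (g x) (g y) := ⟨by simp [hg]; linarith, by simp [hg]; linarith⟩
    obtain ⟨z, hz, hz0⟩ := intermediate_value_Icc hxy (hgc.mono hsub2) h0
    have : f z = z := by have : g z = 0 := hz0; simp [hg] at this; linarith
    exact hnofix z ⟨lt_of_lt_of_le hx.1 hz.1, lt_of_le_of_lt hz.2 hy.2⟩ this
  · have hsub2 : Icc y x ⊆ Icc l r := fun t ht =>
      hsub ⟨le_trans hy.1.le ht.1, le_trans ht.2 hx.2.le⟩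
    have h0 : (0:ℝ) ∈ Icc (g x) (g y) := ⟨by simp [hg]; linarith, by simp [hg]; linarith⟩
    obtain ⟨z, hz, hz0⟩ := intermediate_value_Icc' hxy (hgc.mono hsub2) h0
    have : f z = z := by have : g z = 0 := hz0; simp [hg] at this; linarith
    exact hnofix z ⟨lt_of_lt_of_le hy.1 hz.1, lt_of_le_of_lt hz.2 hx.2⟩ this

lemma notAttr_right {f : ℝ → ℝ} {l r p e : ℝ} (hfm : StrictMonoOn f (Icc l r))
    (hsub : Icc p e ⊆ Icc l r) (hpe : p < e) (hfe : f e = e)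
    (hgt : ∀ x ∈ Ioo p e, x < f x) : ¬ AttractingFix f p := by
  rintro ⟨-, η, hη, hconv⟩
  set x := min ((p + e) / 2) (p + η / 2) with hxdef
  have hx1 : p < x := lt_min (by linarith) (by linarith)
  have hx2 : x < e := lt_of_le_of_lt (min_le_left _ _) (by linarith)
  have hx3 : x < p + η := lt_of_le_of_lt (min_le_right _ _) (by linarith)
  have hkey : ∀ n, x ≤ f^[n] x ∧ f^[n] x < e := by
    intro n
    induction n with
    | zero => exact ⟨le_rfl, hx2⟩
    | succ n ih =>
        rw [Function.iterate_succ_apply']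
        have hyIoo : f^[n] x ∈ Ioo p e := ⟨lt_of_lt_of_le hx1 ih.1, ih.2⟩
        refine ⟨le_trans ih.1 (hgt _ hyIoo).le, ?_⟩
        calc f (f^[n] x) < f e :=
              hfm (hsub ⟨hyIoo.1.le, hyIoo.2.le⟩) (hsub ⟨hpe.le, le_rfl⟩) hyIoo.2
          _ = e := hfe
  have := ge_of_tendsto (hconv x ⟨by linarith, hx3⟩)
    (Filter.Eventually.of_forall fun n => (hkey n).1)
  linarith

lemma notRep_left {f : ℝ → ℝ} {l r p e : ℝ} (hfm : StrictMonoOn f (Icc l r))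
    (hsub : Icc e p ⊆ Icc l r) (hep : e < p) (hfp : f p = p)
    (hgt : ∀ x ∈ Ioo e p, x < f x) : ¬ RepellingFix f p := by
  rintro ⟨-, η, hη, hrep⟩
  set x := max ((e + p) / 2) (p - η / 2) with hxdef
  have hx1 : x < p := max_lt (by linarith) (by linarith)
  have hx2 : e < x := lt_of_lt_of_le (by linarith : e < (e + p) / 2) (le_max_left _ _)
  have hx3 : p - η < x := lt_of_lt_of_le (by linarith : p - η < p - η / 2) (le_max_right _ _)
  have hkey : ∀ n, x ≤ f^[n] x ∧ f^[n] x < p := by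
    intro n
    induction n with
    | zero => exact ⟨le_rfl, hx1⟩
    | succ n ih =>
        rw [Function.iterate_succ_apply']
        have hyIoo : f^[n] x ∈ Ioo e p := ⟨lt_of_lt_of_le hx2 ih.1, ih.2⟩
        refine ⟨le_trans ih.1 (hgt _ hyIoo).le, ?_⟩
        calc f (f^[n] x) < f p :=
              hfm (hsub ⟨hyIoo.1.le, hyIoo.2.le⟩) (hsub ⟨hep.le, le_rfl⟩) hyIoo.2
          _ = p := hfp
  obtain ⟨n, hn⟩ := hrep x ⟨hx3, by linarith⟩ (ne_of_lt hx1)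
  exact hn ⟨lt_of_lt_of_le hx3 (hkey n).1, lt_trans (hkey n).2 (by linarith)⟩

lemma notRep_right {f : ℝ → ℝ} {l r p e : ℝ} (hfm : StrictMonoOn f (Icc l r))
    (hsub : Icc p e ⊆ Icc l r) (hpe : p < e) (hfp : f p = p)
    (hlt : ∀ x ∈ Ioo p e, f x < x) : ¬ RepellingFix f p := by
  rintro ⟨-, η, hη, hrep⟩
  set x := min ((p + e) / 2) (p + η / 2) with hxdef
  have hx1 : p < x := lt_min (by linarith) (by linarith)
  have hx2 : x < e := lt_of_le_of_lt (min_le_left _ _) (by linarith)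
  have hx3 : x < p + η := lt_of_le_of_lt (min_le_right _ _) (by linarith)
  have hkey : ∀ n, p < f^[n] x ∧ f^[n] x ≤ x := by
    intro n
    induction n with
    | zero => exact ⟨hx1, le_rfl⟩
    | succ n ih =>
        rw [Function.iterate_succ_apply']
        have hyIoo : f^[n] x ∈ Ioo p e := ⟨ih.1, lt_of_le_of_lt ih.2 hx2⟩
        refine ⟨?_, le_trans (hlt _ hyIoo).le ih.2⟩
        calc p = f p := hfp.symm
          _ < f (f^[n] x) :=
              hfm (hsub ⟨le_rfl, hpe.le⟩) (hsub ⟨hyIoo.1.le, hyIoo.2.le⟩) hyIoo.1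
  obtain ⟨n, hn⟩ := hrep x ⟨by linarith, hx3⟩ (ne_of_gt hx1)
  exact hn ⟨by linarith [(hkey n).1], lt_of_le_of_lt (hkey n).2 hx3⟩

lemma notAttr_left {f : ℝ → ℝ} {l r p e : ℝ} (hfm : StrictMonoOn f (Icc l r))
    (hsub : Icc e p ⊆ Icc l r) (hep : e < p) (hfe : f e = e)
    (hlt : ∀ x ∈ Ioo e p, f x < x) : ¬ AttractingFix f p := by
  rintro ⟨-, η, hη, hconv⟩
  set x := max ((e + p) / 2) (p - η / 2) with hxdef
  have hx1 : x < p := max_lt (by linarith) (by linarith)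
  have hx2 : e < x := lt_of_lt_of_le (by linarith : e < (e + p) / 2) (le_max_left _ _)
  have hx3 : p - η < x := lt_of_lt_of_le (by linarith : p - η < p - η / 2) (le_max_right _ _)
  have hkey : ∀ n, e < f^[n] x ∧ f^[n] x ≤ x := by
    intro n
    induction n with
    | zero => exact ⟨hx2, le_rfl⟩
    | succ n ih =>
        rw [Function.iterate_succ_apply']
        have hyIoo : f^[n] x ∈ Ioo e p := ⟨ih.1, lt_of_le_of_lt ih.2 hx1⟩
        refine ⟨?_, le_trans (hlt _ hyIoo).le ih.2⟩
        calc e = f e := hfe.symm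
          _ < f (f^[n] x) :=
              hfm (hsub ⟨le_rfl, hep.le⟩) (hsub ⟨hyIoo.1.le, hyIoo.2.le⟩) hyIoo.1
  have := le_of_tendsto (hconv x ⟨hx3, by linarith⟩)
    (Filter.Eventually.of_forall fun n => (hkey n).2)
  linarith

/-- Transversality forces the sign of the displacement to alternate across an
interior fixed point. -/
lemma alternation {f : ℝ → ℝ} {l r e₁ p e₂ : ℝ} (hfm : StrictMonoOn f (Icc l r))
    (hsub : Icc e₁ e₂ ⊆ Icc l r) (h1 : e₁ < p) (h2 : p < e₂)
    (hfe₁ : f e₁ = e₁) (hfp : f p = p) (hfe₂ : f e₂ = e₂)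
    (htp : TransverseFix f p) :
    ¬((∀ x ∈ Ioo e₁ p, x < f x) ∧ (∀ x ∈ Ioo p e₂, x < f x)) ∧
    ¬((∀ x ∈ Ioo e₁ p, f x < x) ∧ (∀ x ∈ Ioo p e₂, f x < x)) := by
  have hsubL : Icc e₁ p ⊆ Icc l r := fun t ht => hsub ⟨ht.1, le_trans ht.2 h2.le⟩
  have hsubR : Icc p e₂ ⊆ Icc l r := fun t ht => hsub ⟨le_trans h1.le ht.1, ht.2⟩
  constructor
  · rintro ⟨hL, hR⟩
    rcases htp with hA | hRp
    · exact notAttr_right hfm hsubR h2 hfe₂ hR hA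
    · exact notRep_left hfm hsubL h1 hfp hL hRp
  · rintro ⟨hL, hR⟩
    rcases htp with hA | hRp
    · exact notAttr_left hfm hsubL h1 hfe₁ hL hA
    · exact notRep_right hfm hsubR h2 hfp hR hRp

/-- The fixed point set is finite. -/
lemma fixedFinite {f : ℝ → ℝ} {l r : ℝ}
    (hfc : ContinuousOn f (Icc l r))
    (htrans : ∀ p ∈ Icc l r, f p = p → TransverseFix f p) :
    {p ∈ Icc l r | f p = p}.Finite := by
  set F := {p ∈ Icc l r | f p = p} with hF
  by_contra hinf
  have hinf' : F.Infinite := hinf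
  obtain ⟨p, hpK, hacc⟩ := hinf'.exists_accPt_of_subset_isCompact isCompact_Icc
    (fun x hx => hx.1)
  have hFclosed : IsClosed F := by
    have h1 : IsClosed (Icc l r ∩ (fun x => f x - x) ⁻¹' {0}) :=
      (hfc.sub continuousOn_id).preimage_isClosed_of_isClosed isClosed_Icc
        isClosed_singleton
    have h2 : F = Icc l r ∩ (fun x => f x - x) ⁻¹' {0} := by
      ext x
      simp only [hF, mem_inter_iff, mem_preimage, mem_singleton_iff, mem_setOf_eq, sub_eq_zero]
    rw [h2]; exact h1
  have hnhds := accPt_iff_nhds.1 hacc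
  have hpF : p ∈ F := by
    rw [← hFclosed.closure_eq]
    rw [mem_closure_iff_nhds]
    intro U hU
    obtain ⟨y, hy, -⟩ := hnhds U hU
    exact ⟨y, hy⟩
  rcases htrans p hpF.1 hpF.2 with ⟨-, η, hη, hconv⟩ | ⟨-, η, hη, hrep⟩
  · obtain ⟨y, hy, hyne⟩ := hnhds (Ioo (p - η) (p + η))
      (isOpen_Ioo.mem_nhds ⟨by linarith, by linarith⟩)
    have : Filter.Tendsto (fun n => f^[n] y) Filter.atTop (nhds p) := hconv y hy.1
    rw [show (fun n => f^[n] y) = fun _ => y from funext fun n =>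
      Function.iterate_fixed hy.2.2 n] at this
    exact hyne (tendsto_nhds_unique tendsto_const_nhds this)
  · obtain ⟨y, hy, hyne⟩ := hnhds (Ioo (p - η) (p + η))
      (isOpen_Ioo.mem_nhds ⟨by linarith, by linarith⟩)
    obtain ⟨n, hn⟩ := hrep y hy.1 hyne
    rw [Function.iterate_fixed hy.2.2 n] at hn
    exact hn hy.1

lemma restrictBijOn {f : ℝ → ℝ} {l r p q : ℝ}
    (hfm : StrictMonoOn f (Icc l r)) (hfB : BijOn f (Icc l r) (Icc l r))
    (hp : f p = p) (hq : f q = q) (hpq : p ≤ q)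
    (hpI : p ∈ Icc l r) (hqI : q ∈ Icc l r) : BijOn f (Icc p q) (Icc p q) := by
  have hsub : Icc p q ⊆ Icc l r := Icc_subset_Icc hpI.1 hqI.2
  refine ⟨?_, (hfm.mono hsub).injOn, ?_⟩
  · intro x hx
    constructor
    · rw [← hp]; exact hfm.monotoneOn (hsub ⟨le_rfl, hpq⟩) (hsub hx) hx.1
    · rw [← hq]; exact hfm.monotoneOn (hsub hx) (hsub ⟨hpq, le_rfl⟩) hx.2
  · intro y hy
    obtain ⟨x, hx, rfl⟩ := hfB.surjOn ⟨le_trans hpI.1 hy.1, le_trans hy.2 hqI.2⟩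
    refine ⟨x, ⟨?_, ?_⟩, rfl⟩
    · by_contra hc
      push_neg at hc
      have := hfm hx (hsub ⟨le_rfl, hpq⟩) hc
      rw [hp] at this
      exact absurd hy.1 (not_le.2 this)
    · by_contra hc
      push_neg at hc
      have := hfm (hsub ⟨hpq, le_rfl⟩) hx hc
      rw [hq] at this
      exact absurd hy.2 (not_le.2 this)

lemma notBoth {f : ℝ → ℝ} {α β : ℝ} (h : α < β) :
    ¬((∀ x ∈ Ioo α β, x < f x) ∧ (∀ x ∈ Ioo α β, f x < x)) := by
  rintro ⟨h1, h2⟩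
  have hm : (α + β) / 2 ∈ Ioo α β := ⟨by linarith, by linarith⟩
  exact absurd (h1 _ hm) (not_lt.2 (h2 _ hm).le)

/-- For an even number of transverse fixed points, the displacement sign on the
first gap agrees with the sign on the last gap. -/
lemma signFact : ∀ k : ℕ, ∀ (f : ℝ → ℝ) (l r : ℝ), l < r →
    ContinuousOn f (Icc l r) → StrictMonoOn f (Icc l r) →
    BijOn f (Icc l r) (Icc l r) →
    (∀ p ∈ Icc l r, f p = p → TransverseFix f p) →
    {p ∈ Icc l r | f p = p}.ncard = k → Even k →
    ∀ m M : ℝ, m ∈ Icc l r → f m = m → l < m → (∀ x ∈ Ioo l m, f x ≠ x) →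
      M ∈ Icc l r → f M = M → M < r → (∀ x ∈ Ioo M r, f x ≠ x) →
      ((∀ x ∈ Ioo l m, x < f x) ↔ (∀ x ∈ Ioo M r, x < f x)) := by
  intro k
  induction k using Nat.strong_induction_on with
  | _ k IH =>
    intro f l r hlr hfc hfm hfB htrans hcard heven m M hmI hmfix hlm hLgap hMI hMfix hMr hRgap
    set F := {p ∈ Icc l r | f p = p} with hFdef
    have hFfin : F.Finite := fixedFinite hfc htrans
    have hlF : l ∈ F := ⟨⟨le_rfl, hlr.le⟩, fix_left hlr.le hfm hfB⟩
    have hrF : r ∈ F := ⟨⟨hlr.le, le_rfl⟩, fix_right hlr.le hfm hfB⟩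
    set S := F \ {l, r} with hSdef
    have hSfin : S.Finite := hFfin.subset diff_subset
    rcases eq_empty_or_nonempty S with hSe | hSne
    · -- no interior fixed points
      have hnofix : ∀ x ∈ Ioo l r, f x ≠ x := by
        intro x hx hfx
        have hxS : x ∈ S := ⟨⟨⟨hx.1.le, hx.2.le⟩, hfx⟩, by
          simp only [mem_insert_iff, mem_singleton_iff]
          push_neg
          exact ⟨ne_of_gt hx.1, ne_of_lt hx.2⟩⟩
        rw [hSe] at hxS
        exact hxS
      rcases signConst hlr subset_rfl hfc hnofix with hpos | hneg
      · refine iff_of_true (fun x hx => hpos x ⟨hx.1, lt_of_lt_of_le hx.2 hmI.2⟩)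
          (fun x hx => hpos x ⟨lt_of_le_of_lt hMI.1 hx.1, hx.2⟩)
      · refine iff_of_false ?_ ?_
        · intro hall
          have hx : (l + m) / 2 ∈ Ioo l m := ⟨by linarith, by linarith⟩
          exact absurd (hall _ hx)
            (not_lt.2 (hneg _ ⟨hx.1, lt_of_lt_of_le hx.2 hmI.2⟩).le)
        · intro hall
          have hx : (M + r) / 2 ∈ Ioo M r := ⟨by linarith, by linarith⟩
          exact absurd (hall _ hx)
            (not_lt.2 (hneg _ ⟨lt_of_le_of_lt hMI.1 hx.1, hx.2⟩).le)
    · -- at least two interior fixed points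
      set p := sInf S with hpdef
      set q := sSup S with hqdef
      have hpS : p ∈ S := hSne.csInf_mem hSfin
      have hqS : q ∈ S := hSne.csSup_mem hSfin
      have hple : ∀ x ∈ S, p ≤ x := fun x hx => csInf_le hSfin.bddBelow hx
      have hqge : ∀ x ∈ S, x ≤ q := fun x hx => le_csSup hSfin.bddAbove hx
      have hpne : p ≠ l ∧ p ≠ r := by
        have := hpS.2
        simp only [mem_insert_iff, mem_singleton_iff] at this
        push_neg at this
        exact this
      have hqne : q ≠ l ∧ q ≠ r := by
        have := hqS.2
        simp only [mem_insert_iff, mem_singleton_iff] at this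
        push_neg at this
        exact this
      have hlp : l < p := lt_of_le_of_ne hpS.1.1.1 (Ne.symm hpne.1)
      have hqr : q < r := lt_of_le_of_ne hqS.1.1.2 hqne.2
      have hpq : p ≤ q := hple q hqS
      have hpr : p < r := lt_of_le_of_lt hpq hqr
      have hlq : l < q := lt_of_lt_of_le hlp hpq
      have hlrsub : ({l, r} : Set ℝ) ⊆ F := by
        intro x hx
        simp only [mem_insert_iff, mem_singleton_iff] at hx
        rcases hx with rfl | rfl
        · exact hlF
        · exact hrF
      have hcardS : S.ncard = k - 2 := by
        rw [hSdef, Set.ncard_diff hlrsub, Set.ncard_pair (ne_of_lt hlr), hcard]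
      have hk3 : 4 ≤ k := by
        have hsub3 : ({l, r, p} : Set ℝ) ⊆ F := by
          intro x hx
          simp only [mem_insert_iff, mem_singleton_iff] at hx
          rcases hx with rfl | rfl | rfl
          · exact hlF
          · exact hrF
          · exact hpS.1
        have h3 : ({l, r, p} : Set ℝ).ncard = 3 := by
          rw [Set.ncard_insert_of_notMem (by
            simp only [mem_insert_iff, mem_singleton_iff]
            push_neg
            exact ⟨ne_of_lt hlr, Ne.symm hpne.1⟩) ((Set.finite_singleton _).insert _),
            Set.ncard_pair (Ne.symm hpne.2)]
        have := Set.ncard_le_ncard hsub3 hFfin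
        rw [h3, hcard] at this
        obtain ⟨j, hj⟩ := heven
        omega
      have hpq' : p < q := by
        rcases eq_or_lt_of_le hpq with heq | h
        · exfalso
          have hSsing : S = {p} := by
            apply subset_antisymm
            · intro x hx
              have h1 : x ≤ p := by rw [heq]; exact hqge x hx
              exact mem_singleton_iff.2 (le_antisymm h1 (hple x hx))
            · intro x hx
              rw [mem_singleton_iff] at hx
              rw [hx]
              exact hpS
          rw [hSsing, Set.ncard_singleton] at hcardS
          omega
        · exact h
      -- identify m = p and M = q
      have hmp : m = p := by
        have hmS : m ∈ S := by
          refine ⟨⟨hmI, hmfix⟩, ?_⟩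
          simp only [mem_insert_iff, mem_singleton_iff]
          push_neg
          refine ⟨ne_of_gt hlm, ?_⟩
          intro hc
          exact hLgap p ⟨hlp, by rw [hc]; exact hpr⟩ hpS.1.2
        refine le_antisymm ?_ (hple m hmS)
        by_contra hc
        push_neg at hc
        exact hLgap p ⟨hlp, hc⟩ hpS.1.2
      have hMq : M = q := by
        have hMS : M ∈ S := by
          refine ⟨⟨hMI, hMfix⟩, ?_⟩
          simp only [mem_insert_iff, mem_singleton_iff]
          push_neg
          refine ⟨?_, ne_of_lt hMr⟩
          intro hc
          exact hRgap q ⟨by rw [hc]; exact hlq, hqr⟩ hqS.1.2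
        refine le_antisymm (hqge M hMS) ?_
        by_contra hc
        push_neg at hc
        exact hRgap q ⟨hc, hqr⟩ hqS.1.2
      subst hmp
      subst hMq
      -- the next fixed point after p and the previous one before q
      have hSpne : (S \ {p}).Nonempty := ⟨q, hqS, by simp [ne_of_gt hpq']⟩
      have hSqne : (S \ {q}).Nonempty := ⟨p, hpS, by simp [ne_of_lt hpq']⟩
      set mi := sInf (S \ {p}) with hmidef
      set Mi := sSup (S \ {q}) with hMidef
      have hmiS : mi ∈ S \ {p} := hSpne.csInf_mem (hSfin.subset diff_subset)
      have hMiS : Mi ∈ S \ {q} := hSqne.csSup_mem (hSfin.subset diff_subset)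
      have hpmi : p < mi := lt_of_le_of_ne (hple mi hmiS.1) (Ne.symm hmiS.2)
      have hMiq : Mi < q := lt_of_le_of_ne (hqge Mi hMiS.1) hMiS.2
      have hmiq : mi ≤ q := hqge mi hmiS.1
      have hpMi : p ≤ Mi := hple Mi hMiS.1
      have hmemS : ∀ x, f x = x → l < x → x < r → x ∈ S := by
        intro x hfx h1 h2
        exact ⟨⟨⟨h1.le, h2.le⟩, hfx⟩, by
          simp only [mem_insert_iff, mem_singleton_iff]
          push_neg
          exact ⟨ne_of_gt h1, ne_of_lt h2⟩⟩
      have hGap2 : ∀ x ∈ Ioo p mi, f x ≠ x := by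
        intro x hx hfx
        have hxS : x ∈ S \ {p} := ⟨hmemS x hfx (lt_trans hlp hx.1)
          (lt_of_lt_of_le (lt_of_lt_of_le hx.2 hmiq) hqr.le), ne_of_gt hx.1⟩
        exact absurd (csInf_le (hSfin.subset diff_subset).bddBelow hxS) (not_le.2 hx.2)
      have hGap3 : ∀ x ∈ Ioo Mi q, f x ≠ x := by
        intro x hx hfx
        have hxS : x ∈ S \ {q} := ⟨hmemS x hfx
          (lt_of_le_of_lt (le_trans hlp.le hpMi) hx.1) (lt_trans hx.2 hqr),
          ne_of_lt hx.2⟩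
        exact absurd (le_csSup (hSfin.subset diff_subset).bddAbove hxS) (not_le.2 hx.1)
      -- restricted configuration on [p, q]
      have hsubpq : Icc p q ⊆ Icc l r := Icc_subset_Icc hpS.1.1.1 hqS.1.1.2
      have hcardI : {x ∈ Icc p q | f x = x}.ncard = k - 2 := by
        have : {x ∈ Icc p q | f x = x} = S := by
          ext x
          simp only [mem_setOf_eq, hSdef, mem_diff, mem_insert_iff, mem_singleton_iff,
            hFdef]
          constructor
          · rintro ⟨hx1, hx2⟩
            refine ⟨⟨hsubpq hx1, hx2⟩, ?_⟩
            push_neg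
            exact ⟨ne_of_gt (lt_of_lt_of_le hlp hx1.1),
              ne_of_lt (lt_of_le_of_lt hx1.2 hqr)⟩
          · rintro ⟨⟨hx1, hx2⟩, hx3⟩
            push_neg at hx3
            exact ⟨⟨hple x ⟨⟨hx1, hx2⟩, by
              simp only [mem_insert_iff, mem_singleton_iff]; push_neg; exact hx3⟩,
              hqge x ⟨⟨hx1, hx2⟩, by
              simp only [mem_insert_iff, mem_singleton_iff]; push_neg; exact hx3⟩⟩, hx2⟩
        rw [this]
        exact hcardS
      have hevenI : Even (k - 2) := by
        obtain ⟨j, hj⟩ := heven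
        exact ⟨j - 1, by omega⟩
      have hIH := IH (k - 2) (by omega) f p q hpq' (hfc.mono hsubpq) (hfm.mono hsubpq)
        (restrictBijOn hfm hfB hpS.1.2 hqS.1.2 hpq'.le hpS.1.1 hqS.1.1)
        (fun x hx hfx => htrans x (hsubpq hx) hfx) hcardI hevenI
        mi Mi ⟨hpmi.le, hmiq⟩ hmiS.1.1.2 hpmi hGap2
        ⟨hpMi, hMiq.le⟩ hMiS.1.1.2 hMiq hGap3
      -- alternation at p and at q
      have haltp := alternation hfm
        (Icc_subset_Icc le_rfl (le_trans hmiq hqS.1.1.2) : Icc l mi ⊆ Icc l r)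
        hlp hpmi hlF.2 hpS.1.2 hmiS.1.1.2 (htrans p hpS.1.1 hpS.1.2)
      have haltq := alternation hfm
        (Icc_subset_Icc (le_trans hpS.1.1.1 hpMi) le_rfl : Icc Mi r ⊆ Icc l r)
        hMiq hqr hMiS.1.1.2 hqS.1.2 hrF.2 (htrans q hqS.1.1 hqS.1.2)
      -- sign dichotomies on the four gaps
      have hd1 := signConst hlp (Icc_subset_Icc le_rfl hpS.1.1.2) hfc hLgap
      have hd2 := signConst hpmi (Icc_subset_Icc hpS.1.1.1
        (le_trans hmiq hqS.1.1.2)) hfc hGap2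
      have hd3 := signConst hMiq (Icc_subset_Icc (le_trans hpS.1.1.1 hpMi)
        hqS.1.1.2) hfc hGap3
      have hd4 := signConst hqr (Icc_subset_Icc hqS.1.1.1 le_rfl) hfc hRgap
      constructor
      · intro hP1
        have hnP2 : ¬(∀ x ∈ Ioo p mi, x < f x) := fun hP2 => haltp.1 ⟨hP1, hP2⟩
        have hnP3 : ¬(∀ x ∈ Ioo Mi q, x < f x) := fun h => hnP2 (hIH.2 h)
        have hN3 : ∀ x ∈ Ioo Mi q, f x < x := hd3.resolve_left hnP3
        have hnN4 : ¬(∀ x ∈ Ioo q r, f x < x) := fun hN4 => haltq.2 ⟨hN3, hN4⟩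
        exact hd4.resolve_right hnN4
      · intro hP4
        have hnP3 : ¬(∀ x ∈ Ioo Mi q, x < f x) := fun hP3 => haltq.1 ⟨hP3, hP4⟩
        have hnP2 : ¬(∀ x ∈ Ioo p mi, x < f x) := fun h => hnP3 (hIH.1 h)
        have hN2 : ∀ x ∈ Ioo p mi, f x < x := hd2.resolve_left hnP2
        have hnN1 : ¬(∀ x ∈ Ioo l p, f x < x) := fun hN1 => haltp.2 ⟨hN1, hN2⟩
        exact hd1.resolve_right hnN1

lemma invOn_bijOn {f f' : ℝ → ℝ} {l r : ℝ}
    (hfm : StrictMonoOn f (Icc l r)) (hfB : BijOn f (Icc l r) (Icc l r))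
    (hinv : InvOn f' f (Icc l r) (Icc l r)) : BijOn f' (Icc l r) (Icc l r) :=
  ⟨invOn_mapsTo hfB hinv, (invOn_strictMonoOn hfm hfB hinv).injOn,
   fun y hy => ⟨f y, hfB.mapsTo hy, hinv.1 hy⟩⟩

/-- Data for the reflected inverse map `ρ ∘ f' ∘ ρ` on a gap `[c, d]`. -/
lemma reflectData {f f' : ℝ → ℝ} {l r c d : ℝ}
    (hfm : StrictMonoOn f (Icc l r)) (hfB : BijOn f (Icc l r) (Icc l r))
    (hinv : InvOn f' f (Icc l r) (Icc l r))
    (hcd : c < d) (hcI : c ∈ Icc l r) (hdI : d ∈ Icc l r)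
    (hfcfix : f c = c) (hfdfix : f d = d) :
    StrictMonoOn (fun x => c + d - f' (c + d - x)) (Icc c d) ∧
    BijOn (fun x => c + d - f' (c + d - x)) (Icc c d) (Icc c d) ∧
    InvOn (fun x => c + d - f (c + d - x)) (fun x => c + d - f' (c + d - x))
      (Icc c d) (Icc c d) ∧
    (fun x => c + d - f' (c + d - x)) c = c ∧
    (fun x => c + d - f' (c + d - x)) d = d ∧
    ((∀ x ∈ Ioo c d, x < f x) → (∀ y ∈ Ioo c d, y < c + d - f' (c + d - y))) ∧
    ((∀ x ∈ Ioo c d, f x < x) → (∀ y ∈ Ioo c d, c + d - f' (c + d - y) < y)) := by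
  have hsub : Icc c d ⊆ Icc l r := Icc_subset_Icc hcI.1 hdI.2
  have hρmem : ∀ x ∈ Icc c d, c + d - x ∈ Icc c d := fun x hx =>
    ⟨by linarith [hx.2], by linarith [hx.1]⟩
  have hf'c : f' c = c := invOn_fixed hcI hinv hfcfix
  have hf'd : f' d = d := invOn_fixed hdI hinv hfdfix
  have hf'm : StrictMonoOn f' (Icc l r) := invOn_strictMonoOn hfm hfB hinv
  have hf'B : BijOn f' (Icc l r) (Icc l r) := invOn_bijOn hfm hfB hinv
  have hf'Bcd : BijOn f' (Icc c d) (Icc c d) :=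
    restrictBijOn hf'm hf'B hf'c hf'd hcd.le hcI hdI
  have hfBcd : BijOn f (Icc c d) (Icc c d) :=
    restrictBijOn hfm hfB hfcfix hfdfix hcd.le hcI hdI
  have hgm : StrictMonoOn (fun x => c + d - f' (c + d - x)) (Icc c d) := by
    intro x hx y hy hxy
    simp only
    have h1 : c + d - y < c + d - x := by linarith
    have := hf'm (hsub (hρmem y hy)) (hsub (hρmem x hx)) h1
    linarith
  have hgmaps : MapsTo (fun x => c + d - f' (c + d - x)) (Icc c d) (Icc c d) := by
    intro x hx
    have := hf'Bcd.mapsTo (hρmem x hx)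
    exact ⟨by simp only; linarith [this.2], by simp only; linarith [this.1]⟩
  have hgsurj : SurjOn (fun x => c + d - f' (c + d - x)) (Icc c d) (Icc c d) := by
    intro y hy
    refine ⟨c + d - f (c + d - y), ?_, ?_⟩
    · have := hfBcd.mapsTo (hρmem y hy)
      exact ⟨by linarith [this.2], by linarith [this.1]⟩
    · simp only
      have h1 : c + d - (c + d - f (c + d - y)) = f (c + d - y) := by ring
      rw [h1, hinv.1 (hsub (hρmem y hy))]
      ring
  have hinvOn : InvOn (fun x => c + d - f (c + d - x))
      (fun x => c + d - f' (c + d - x)) (Icc c d) (Icc c d) := by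
    constructor
    · intro x hx
      simp only
      have h1 : c + d - (c + d - f' (c + d - x)) = f' (c + d - x) := by ring
      rw [h1, hinv.2 (hsub (hρmem x hx))]
      ring
    · intro x hx
      simp only
      have h1 : c + d - (c + d - f (c + d - x)) = f (c + d - x) := by ring
      rw [h1, hinv.1 (hsub (hρmem x hx))]
      ring
  refine ⟨hgm, ⟨hgmaps, hgm.injOn, hgsurj⟩, hinvOn, ?_, ?_, ?_, ?_⟩
  · simp only
    rw [show c + d - c = d by ring, hf'd]
    ring
  · simp only
    rw [show c + d - d = c by ring, hf'c]
    ring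
  · intro hpos y hy
    have htI : c + d - y ∈ Ioo c d := ⟨by linarith [hy.2], by linarith [hy.1]⟩
    have hlt : f' (c + d - y) < c + d - y := by
      by_contra hcon
      push_neg at hcon
      have h2 := hfm.monotoneOn (hsub ⟨htI.1.le, htI.2.le⟩)
        (invOn_mapsTo hfB hinv (hsub ⟨htI.1.le, htI.2.le⟩))
        hcon
      rw [hinv.2 (hsub ⟨htI.1.le, htI.2.le⟩)] at h2
      exact absurd (hpos _ htI) (not_lt.2 h2)
    linarith
  · intro hneg y hy
    have htI : c + d - y ∈ Ioo c d := ⟨by linarith [hy.2], by linarith [hy.1]⟩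
    have hlt : c + d - y < f' (c + d - y) := by
      by_contra hcon
      push_neg at hcon
      have h2 := hfm.monotoneOn
        (invOn_mapsTo hfB hinv (hsub ⟨htI.1.le, htI.2.le⟩))
        (hsub ⟨htI.1.le, htI.2.le⟩) hcon
      rw [hinv.2 (hsub ⟨htI.1.le, htI.2.le⟩)] at h2
      exact absurd (hneg _ htI) (not_lt.2 h2)
    linarith

lemma contOn_of_strictMonoSurj {h : ℝ → ℝ} {a b : ℝ}
    (hm : StrictMonoOn h (Icc a b)) (hmaps : MapsTo h (Icc a b) (Icc a b))
    (hsurj : SurjOn h (Icc a b) (Icc a b)) : ContinuousOn h (Icc a b) := by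
  have hM := extend_strictMono hm hmaps
  have hsurj' : Function.Surjective (extend h a b) := by
    intro y
    by_cases hy : y ∈ Icc a b
    · obtain ⟨x, hx, hfx⟩ := hsurj hy
      exact ⟨x, by rw [extend_eq hx, hfx]⟩
    · exact ⟨y, by unfold extend; rw [if_neg hy]⟩
  have hc : Continuous (extend h a b) := hM.monotone.continuous_of_surjective hsurj'
  exact hc.continuousOn.congr fun x hx => (extend_eq hx).symm

/-- Main induction: a decreasing conjugacy between `f` and `f'` exists. -/
lemma key : ∀ k : ℕ, ∀ (f f' : ℝ → ℝ) (l r : ℝ), l < r →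
    ContinuousOn f (Icc l r) → StrictMonoOn f (Icc l r) →
    BijOn f (Icc l r) (Icc l r) → InvOn f' f (Icc l r) (Icc l r) →
    (∀ p ∈ Icc l r, f p = p → TransverseFix f p) →
    {p ∈ Icc l r | f p = p}.ncard = k → Even k →
    ∃ h : ℝ → ℝ, StrictAntiOn h (Icc l r) ∧ MapsTo h (Icc l r) (Icc l r) ∧
      SurjOn h (Icc l r) (Icc l r) ∧ h l = r ∧ h r = l ∧
      ∀ x ∈ Icc l r, f' (h x) = h (f x) := by
  intro k
  induction k using Nat.strong_induction_on with
  | _ k IH =>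
    intro f f' l r hlr hfc hfm hfB hinv htrans hcard heven
    set F := {p ∈ Icc l r | f p = p} with hFdef
    have hFfin : F.Finite := fixedFinite hfc htrans
    have hfl : f l = l := fix_left hlr.le hfm hfB
    have hfr : f r = r := fix_right hlr.le hfm hfB
    have hlF : l ∈ F := ⟨⟨le_rfl, hlr.le⟩, hfl⟩
    have hrF : r ∈ F := ⟨⟨hlr.le, le_rfl⟩, hfr⟩
    set S := F \ {l, r} with hSdef
    have hSfin : S.Finite := hFfin.subset diff_subset
    have hlI : l ∈ Icc l r := ⟨le_rfl, hlr.le⟩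
    have hrI : r ∈ Icc l r := ⟨hlr.le, le_rfl⟩
    rcases eq_empty_or_nonempty S with hSe | hSne
    · -- base case : no interior fixed points
      have hnofix : ∀ x ∈ Ioo l r, f x ≠ x := by
        intro x hx hfx
        have hxS : x ∈ S := ⟨⟨⟨hx.1.le, hx.2.le⟩, hfx⟩, by
          simp only [mem_insert_iff, mem_singleton_iff]
          push_neg
          exact ⟨ne_of_gt hx.1, ne_of_lt hx.2⟩⟩
        rw [hSe] at hxS
        exact hxS
      obtain ⟨hgm, hgB, hginv, hgl, hgr, hgpos, hgneg⟩ :=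
        reflectData hfm hfB hinv hlr hlI hrI hfl hfr
      have hsign : ((∀ x ∈ Ioo l r, x < f x) ∧
          (∀ y ∈ Ioo l r, y < (fun x => l + r - f' (l + r - x)) y)) ∨
          ((∀ x ∈ Ioo l r, f x < x) ∧
          (∀ y ∈ Ioo l r, (fun x => l + r - f' (l + r - x)) y < y)) := by
        rcases signConst hlr subset_rfl hfc hnofix with hp | hn
        · exact Or.inl ⟨hp, hgpos hp⟩
        · exact Or.inr ⟨hn, hgneg hn⟩
      obtain ⟨φ, hφm, hφmaps, hφsurj, hφl, hφr, hφconj⟩ :=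
        conjGap hlr hlr hfm hfB hinv hfl hfr hgm hgB hginv hgl hgr hsign
      refine ⟨fun x => l + r - φ x, ?_, ?_, ?_, ?_, ?_, ?_⟩
      · intro x hx y hy hxy
        simp only
        have := hφm hx hy hxy
        linarith
      · intro x hx
        have := hφmaps hx
        exact ⟨by simp only; linarith [this.2], by simp only; linarith [this.1]⟩
      · intro y hy
        obtain ⟨x, hx, hfx⟩ := hφsurj (⟨by linarith [hy.2], by linarith [hy.1]⟩ :
          l + r - y ∈ Icc l r)
        exact ⟨x, hx, by simp only; rw [hfx]; ring⟩
      · simp only; rw [hφl]; ring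
      · simp only; rw [hφr]; ring
      · intro x hx
        have hc := hφconj x hx
        simp only
        linarith
    · -- inductive step : peel off extreme interior fixed points
      set p := sInf S with hpdef
      set q := sSup S with hqdef
      have hpS : p ∈ S := hSne.csInf_mem hSfin
      have hqS : q ∈ S := hSne.csSup_mem hSfin
      have hple : ∀ x ∈ S, p ≤ x := fun x hx => csInf_le hSfin.bddBelow hx
      have hqge : ∀ x ∈ S, x ≤ q := fun x hx => le_csSup hSfin.bddAbove hx
      have hpne : p ≠ l ∧ p ≠ r := by
        have := hpS.2
        simp only [mem_insert_iff, mem_singleton_iff] at this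
        push_neg at this
        exact this
      have hqne : q ≠ l ∧ q ≠ r := by
        have := hqS.2
        simp only [mem_insert_iff, mem_singleton_iff] at this
        push_neg at this
        exact this
      have hlp : l < p := lt_of_le_of_ne hpS.1.1.1 (Ne.symm hpne.1)
      have hqr : q < r := lt_of_le_of_ne hqS.1.1.2 hqne.2
      have hpq : p ≤ q := hple q hqS
      have hfp : f p = p := hpS.1.2
      have hfq : f q = q := hqS.1.2
      have hpI : p ∈ Icc l r := hpS.1.1
      have hqI : q ∈ Icc l r := hqS.1.1
      have hlrsub : ({l, r} : Set ℝ) ⊆ F := by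
        intro x hx
        simp only [mem_insert_iff, mem_singleton_iff] at hx
        rcases hx with rfl | rfl
        · exact hlF
        · exact hrF
      have hcardS : S.ncard = k - 2 := by
        rw [hSdef, Set.ncard_diff hlrsub, Set.ncard_pair (ne_of_lt hlr), hcard]
      have hk3 : 4 ≤ k := by
        have hsub3 : ({l, r, p} : Set ℝ) ⊆ F := by
          intro x hx
          simp only [mem_insert_iff, mem_singleton_iff] at hx
          rcases hx with rfl | rfl | rfl
          · exact hlF
          · exact hrF
          · exact hpS.1
        have h3 : ({l, r, p} : Set ℝ).ncard = 3 := by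
          rw [Set.ncard_insert_of_notMem (by
            simp only [mem_insert_iff, mem_singleton_iff]
            push_neg
            exact ⟨ne_of_lt hlr, Ne.symm hpne.1⟩) ((Set.finite_singleton _).insert _),
            Set.ncard_pair (Ne.symm hpne.2)]
        have := Set.ncard_le_ncard hsub3 hFfin
        rw [h3, hcard] at this
        obtain ⟨j, hj⟩ := heven
        omega
      have hpq' : p < q := by
        rcases eq_or_lt_of_le hpq with heq | h
        · exfalso
          have hSsing : S = {p} := by
            apply subset_antisymm
            · intro x hx
              have h1 : x ≤ p := by rw [heq]; exact hqge x hx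
              exact mem_singleton_iff.2 (le_antisymm h1 (hple x hx))
            · intro x hx
              rw [mem_singleton_iff] at hx
              rw [hx]
              exact hpS
          rw [hSsing, Set.ncard_singleton] at hcardS
          omega
        · exact h
      have hmemS : ∀ x, f x = x → l < x → x < r → x ∈ S := by
        intro x hfx h1 h2
        exact ⟨⟨⟨h1.le, h2.le⟩, hfx⟩, by
          simp only [mem_insert_iff, mem_singleton_iff]
          push_neg
          exact ⟨ne_of_gt h1, ne_of_lt h2⟩⟩
      have hGapL : ∀ x ∈ Ioo l p, f x ≠ x := by
        intro x hx hfx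
        exact absurd (hple x (hmemS x hfx hx.1
          (lt_trans (lt_of_lt_of_le hx.2 hpq) hqr))) (not_le.2 hx.2)
      have hGapR : ∀ x ∈ Ioo q r, f x ≠ x := by
        intro x hx hfx
        exact absurd (hqge x (hmemS x hfx
          (lt_of_le_of_lt (le_trans hlp.le hpq) hx.1) hx.2)) (not_le.2 hx.1)
      have hsf := signFact k f l r hlr hfc hfm hfB htrans hcard heven p q
        hpI hfp hlp hGapL hqI hfq hqr hGapR
      -- inner conjugacy from the induction hypothesis
      have hsubpq : Icc p q ⊆ Icc l r := Icc_subset_Icc hpI.1 hqI.2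
      have hcardI : {x ∈ Icc p q | f x = x}.ncard = k - 2 := by
        have hEq : {x ∈ Icc p q | f x = x} = S := by
          ext x
          simp only [mem_setOf_eq, hSdef, mem_diff, mem_insert_iff, mem_singleton_iff,
            hFdef]
          constructor
          · rintro ⟨hx1, hx2⟩
            refine ⟨⟨hsubpq hx1, hx2⟩, ?_⟩
            push_neg
            exact ⟨ne_of_gt (lt_of_lt_of_le hlp hx1.1),
              ne_of_lt (lt_of_le_of_lt hx1.2 hqr)⟩
          · rintro ⟨⟨hx1, hx2⟩, hx3⟩
            push_neg at hx3
            have hxS : x ∈ S := ⟨⟨hx1, hx2⟩, by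
              simp only [mem_insert_iff, mem_singleton_iff]; push_neg; exact hx3⟩
            exact ⟨⟨hple x hxS, hqge x hxS⟩, hx2⟩
        rw [hEq]
        exact hcardS
      have hevenI : Even (k - 2) := by
        obtain ⟨j, hj⟩ := heven
        exact ⟨j - 1, by omega⟩
      have hinvpq : InvOn f' f (Icc p q) (Icc p q) :=
        ⟨fun x hx => hinv.1 (hsubpq hx), fun x hx => hinv.2 (hsubpq hx)⟩
      obtain ⟨h₁, hh1anti, hh1maps, hh1surj, hh1p, hh1q, hh1conj⟩ :=
        IH (k - 2) (by omega) f f' p q hpq' (hfc.mono hsubpq) (hfm.mono hsubpq)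
          (restrictBijOn hfm hfB hfp hfq hpq'.le hpI hqI) hinvpq
          (fun x hx hfx => htrans x (hsubpq hx) hfx) hcardI hevenI
      -- outer gap data
      have hsublp : Icc l p ⊆ Icc l r := Icc_subset_Icc le_rfl hpI.2
      have hsubqr : Icc q r ⊆ Icc l r := Icc_subset_Icc hqI.1 le_rfl
      have hinvlp : InvOn f' f (Icc l p) (Icc l p) :=
        ⟨fun x hx => hinv.1 (hsublp hx), fun x hx => hinv.2 (hsublp hx)⟩
      have hinvqr : InvOn f' f (Icc q r) (Icc q r) :=
        ⟨fun x hx => hinv.1 (hsubqr hx), fun x hx => hinv.2 (hsubqr hx)⟩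
      obtain ⟨hgRm, hgRB, hgRinv, hgRq, hgRr, hgRpos, hgRneg⟩ :=
        reflectData hfm hfB hinv hqr hqI hrI hfq hfr
      obtain ⟨hgLm, hgLB, hgLinv, hgLl, hgLp, hgLpos, hgLneg⟩ :=
        reflectData hfm hfB hinv hlp hlI hpI hfl hfp
      have hdL := signConst hlp hsublp hfc hGapL
      have hdR := signConst hqr hsubqr hfc hGapR
      have hsign1 : ((∀ x ∈ Ioo l p, x < f x) ∧
          (∀ y ∈ Ioo q r, y < (fun x => q + r - f' (q + r - x)) y)) ∨
          ((∀ x ∈ Ioo l p, f x < x) ∧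
          (∀ y ∈ Ioo q r, (fun x => q + r - f' (q + r - x)) y < y)) := by
        rcases hdL with hp1 | hn1
        · exact Or.inl ⟨hp1, hgRpos (hsf.1 hp1)⟩
        · exact Or.inr ⟨hn1, hgRneg (hdR.resolve_left
            (fun h4 => notBoth hlp ⟨hsf.2 h4, hn1⟩))⟩
      have hsign2 : ((∀ x ∈ Ioo q r, x < f x) ∧
          (∀ y ∈ Ioo l p, y < (fun x => l + p - f' (l + p - x)) y)) ∨
          ((∀ x ∈ Ioo q r, f x < x) ∧
          (∀ y ∈ Ioo l p, (fun x => l + p - f' (l + p - x)) y < y)) := by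
        rcases hdR with hp4 | hn4
        · exact Or.inl ⟨hp4, hgLpos (hsf.2 hp4)⟩
        · exact Or.inr ⟨hn4, hgLneg (hdL.resolve_left
            (fun h1 => notBoth hqr ⟨hsf.1 h1, hn4⟩))⟩
      obtain ⟨φ₁, hφ1m, hφ1maps, hφ1surj, hφ1l, hφ1p, hφ1conj⟩ :=
        conjGap hlp hqr (hfm.mono hsublp)
          (restrictBijOn hfm hfB hfl hfp hlp.le hlI hpI) hinvlp hfl hfp
          hgRm hgRB hgRinv hgRq hgRr hsign1
      obtain ⟨φ₂, hφ2m, hφ2maps, hφ2surj, hφ2q, hφ2r, hφ2conj⟩ :=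
        conjGap hqr hlp (hfm.mono hsubqr)
          (restrictBijOn hfm hfB hfq hfr hqr.le hqI hrI) hinvqr hfq hfr
          hgLm hgLB hgLinv hgLl hgLp hsign2
      -- glue the three pieces
      set K : ℝ → ℝ := fun x =>
        if x < p then q + r - φ₁ x else if x ≤ q then h₁ x else l + p - φ₂ x
        with hKdef
      have hval1 : ∀ x, x < p → K x = q + r - φ₁ x := by
        intro x h1; rw [hKdef]; simp only [if_pos h1]
      have hval2 : ∀ x, ¬(x < p) → x ≤ q → K x = h₁ x := by
        intro x h1 h2; rw [hKdef]; simp only [if_neg h1, if_pos h2]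
      have hval3 : ∀ x, ¬(x < p) → ¬(x ≤ q) → K x = l + p - φ₂ x := by
        intro x h1 h2; rw [hKdef]; simp only [if_neg h1, if_neg h2]
      have hV1 : ∀ x, l ≤ x → x < p → q < K x ∧ K x ≤ r := by
        intro x h1 h2
        rw [hval1 x h2]
        have hm1 := hφ1maps (⟨h1, h2.le⟩ : x ∈ Icc l p)
        have hm2 : φ₁ x < r := by
          have := hφ1m (⟨h1, h2.le⟩ : x ∈ Icc l p) (⟨hlp.le, le_rfl⟩ : p ∈ Icc l p) h2
          rwa [hφ1p] at this
        exact ⟨by linarith, by linarith [hm1.1]⟩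
      have hV3 : ∀ x, q < x → x ≤ r → l ≤ K x ∧ K x < p := by
        intro x h1 h2
        rw [hval3 x (by push_neg; exact le_trans hpq h1.le) (not_le.2 h1)]
        have hm1 := hφ2maps (⟨h1.le, h2⟩ : x ∈ Icc q r)
        have hm2 : l < φ₂ x := by
          have := hφ2m (⟨le_rfl, hqr.le⟩ : q ∈ Icc q r) (⟨h1.le, h2⟩ : x ∈ Icc q r) h1
          rwa [hφ2q] at this
        exact ⟨by linarith [hm1.2], by linarith⟩
      have hV2 : ∀ x, ¬(x < p) → x ≤ q → p ≤ K x ∧ K x ≤ q := by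
        intro x h1 h2
        rw [hval2 x h1 h2]
        push_neg at h1
        exact ⟨(hh1maps ⟨h1, h2⟩).1, (hh1maps ⟨h1, h2⟩).2⟩
      have hKanti : StrictAntiOn K (Icc l r) := by
        intro x hx y hy hxy
        by_cases hx1 : x < p
        · by_cases hy1 : y < p
          · rw [hval1 x hx1, hval1 y hy1]
            have := hφ1m (⟨hx.1, hx1.le⟩ : x ∈ Icc l p) (⟨hy.1, hy1.le⟩ : y ∈ Icc l p) hxy
            linarith
          · by_cases hy2 : y ≤ q
            · exact lt_of_le_of_lt (hV2 y hy1 hy2).2 (hV1 x hx.1 hx1).1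
            · push_neg at hy2
              exact lt_trans (lt_of_lt_of_le (hV3 y hy2 hy.2).2 hpq)
                (hV1 x hx.1 hx1).1
        · by_cases hx2 : x ≤ q
          · by_cases hy2 : y ≤ q
            · rw [hval2 x hx1 hx2, hval2 y (by push_neg at hx1 ⊢; linarith) hy2]
              push_neg at hx1
              exact hh1anti ⟨hx1, hx2⟩ ⟨by linarith, hy2⟩ hxy
            · push_neg at hy2
              exact lt_of_lt_of_le (hV3 y hy2 hy.2).2 (hV2 x hx1 hx2).1
          · push_neg at hx1 hx2
            have hy2 : q < y := lt_trans hx2 hxy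
            rw [hval3 x (not_lt.2 hx1) (not_le.2 hx2),
              hval3 y (not_lt.2 (le_trans hx1 hxy.le)) (not_le.2 hy2)]
            have := hφ2m (⟨hx2.le, hx.2⟩ : x ∈ Icc q r) (⟨hy2.le, hy.2⟩ : y ∈ Icc q r) hxy
            linarith
      have hKmaps : MapsTo K (Icc l r) (Icc l r) := by
        intro x hx
        by_cases hx1 : x < p
        · have := hV1 x hx.1 hx1
          exact ⟨le_trans hlp.le (le_trans hpq this.1.le), this.2⟩
        · by_cases hx2 : x ≤ q
          · have := hV2 x hx1 hx2
            exact ⟨le_trans hlp.le this.1, le_trans this.2 hqr.le⟩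
          · push_neg at hx2
            have := hV3 x hx2 hx.2
            exact ⟨this.1, le_trans this.2.le (le_trans hpq hqr.le)⟩
      have hKsurj : SurjOn K (Icc l r) (Icc l r) := by
        intro y hy
        by_cases hy1 : y < p
        · obtain ⟨x, hx, hfx⟩ := hφ2surj (⟨by linarith, by linarith [hy.1]⟩ :
            l + p - y ∈ Icc l p)
          have hxq : q < x := by
            rcases eq_or_lt_of_le hx.1 with heq | h
            · exfalso
              rw [← heq, hφ2q] at hfx
              have : y = p := by linarith
              exact absurd this (ne_of_lt hy1)
            · exact h
          refine ⟨x, ⟨le_trans hlp.le (le_trans hpq hx.1), hx.2⟩, ?_⟩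
          rw [hval3 x (not_lt.2 (le_trans hpq hxq.le)) (not_le.2 hxq), hfx]
          ring
        · by_cases hy2 : y ≤ q
          · push_neg at hy1
            obtain ⟨x, hx, hfx⟩ := hh1surj (⟨hy1, hy2⟩ : y ∈ Icc p q)
            refine ⟨x, ⟨le_trans hlp.le hx.1, le_trans hx.2 hqr.le⟩, ?_⟩
            rw [hval2 x (not_lt.2 hx.1) hx.2, hfx]
          · push_neg at hy2
            obtain ⟨x, hx, hfx⟩ := hφ1surj (⟨by linarith [hy.2], by linarith [hy2]⟩ :
              q + r - y ∈ Icc q r)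
            have hxp : x < p := by
              rcases eq_or_lt_of_le hx.2 with heq | h
              · exfalso
                rw [heq, hφ1p] at hfx
                have : y = q := by linarith
                exact absurd this (ne_of_gt hy2)
              · exact h
            refine ⟨x, ⟨hx.1, le_trans hx.2 (le_trans hpq hqr.le)⟩, ?_⟩
            rw [hval1 x hxp, hfx]
            ring
      have hKl : K l = r := by
        rw [hval1 l hlp, hφ1l]
        ring
      have hKr : K r = l := by
        rw [hval3 r (not_lt.2 (le_trans hpq hqr.le)) (not_le.2 hqr), hφ2r]
        ring
      refine ⟨K, hKanti, hKmaps, hKsurj, hKl, hKr, ?_⟩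
      intro x hx
      by_cases hx1 : x < p
      · have hfxp : f x < p := by
          have := hfm (hsublp ⟨hx.1, hx1.le⟩) hpI hx1
          rwa [hfp] at this
        have hfxl : l ≤ f x := (hfB.mapsTo hx).1
        rw [hval1 x hx1, hval1 (f x) hfxp]
        have hc := hφ1conj x ⟨hx.1, hx1.le⟩
        rw [hc]
        ring
      · by_cases hx2 : x ≤ q
        · push_neg at hx1
          have hfx1 : p ≤ f x := by
            have := hfm.monotoneOn hpI (hsubpq ⟨hx1, hx2⟩) hx1
            rwa [hfp] at this
          have hfx2 : f x ≤ q := by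
            have := hfm.monotoneOn (hsubpq ⟨hx1, hx2⟩) hqI hx2
            rwa [hfq] at this
          rw [hval2 x (not_lt.2 hx1) hx2, hval2 (f x) (not_lt.2 hfx1) hfx2]
          exact hh1conj x ⟨hx1, hx2⟩
        · push_neg at hx2
          have hfx1 : q < f x := by
            have := hfm hqI (hsubqr ⟨hx2.le, hx.2⟩) hx2
            rwa [hfq] at this
          have hfx2 : f x ≤ r := (hfB.mapsTo hx).2
          rw [hval3 x (not_lt.2 (le_trans hpq hx2.le)) (not_le.2 hx2),
            hval3 (f x) (not_lt.2 (le_trans hpq hfx1.le)) (not_le.2 hfx1)]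
          have hc := hφ2conj x ⟨hx2.le, hx.2⟩
          rw [hc]
          ring

end Stmt10Aux

open Stmt10Aux in
/-- an increasing homeomorphism of a compact interval with an even
number of transverse fixed points is topologically conjugate to its inverse. -/
theorem stmt_10
    (f f' : ℝ → ℝ) (l r : ℝ) (hlr : l < r)
    (hfc : ContinuousOn f (Icc l r)) (hfm : StrictMonoOn f (Icc l r))
    (hfB : BijOn f (Icc l r) (Icc l r))
    (hinv : InvOn f' f (Icc l r) (Icc l r))
    (htrans : ∀ p ∈ Icc l r, f p = p → TransverseFix f p)
    (heven : Even {p ∈ Icc l r | f p = p}.ncard) :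
    ∃ h : ℝ → ℝ, ContinuousOn h (Icc l r) ∧ BijOn h (Icc l r) (Icc l r) ∧
      ∀ x ∈ Icc l r, f' (h x) = h (f x) := by
  obtain ⟨h, hanti, hmaps, hsurj, hhl, hhr, hconj⟩ :=
    key {p ∈ Icc l r | f p = p}.ncard f f' l r hlr hfc hfm hfB hinv htrans rfl heven
  refine ⟨h, ?_, ⟨hmaps, hanti.injOn, hsurj⟩, hconj⟩
  -- continuity: compose with a reflection to get a monotone map
  have hρmem : ∀ x ∈ Icc l r, l + r - x ∈ Icc l r := fun x hx =>
    ⟨by linarith [hx.2], by linarith [hx.1]⟩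
  set k : ℝ → ℝ := fun x => h (l + r - x) with hkdef
  have hkm : StrictMonoOn k (Icc l r) := by
    intro x hx y hy hxy
    exact hanti (hρmem y hy) (hρmem x hx) (by linarith)
  have hkmaps : MapsTo k (Icc l r) (Icc l r) := fun x hx => hmaps (hρmem x hx)
  have hksurj : SurjOn k (Icc l r) (Icc l r) := by
    intro y hy
    obtain ⟨x, hx, hfx⟩ := hsurj hy
    refine ⟨l + r - x, hρmem x hx, ?_⟩
    rw [hkdef]
    simp only
    rw [show l + r - (l + r - x) = x by ring, hfx]
  have hkcont : ContinuousOn k (Icc l r) := contOn_of_strictMonoSurj hkm hkmaps hksurj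
  have : ContinuousOn (fun x => k (l + r - x)) (Icc l r) :=
    hkcont.comp ((continuous_const.sub continuous_id).continuousOn) hρmem
  refine this.congr fun x hx => ?_
  rw [hkdef]
  simp only
  rw [show l + r - (l + r - x) = x by ring]
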